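/- Let D be an integral domain with quotient field K, and let {D_i} be a collection of local overrings of D with D = ⋂ D_i. Suppose there exists a valuation overring V of D (a valuation subring of K containing D) that contains every D_i and dominates every D_i (i.e., the maximal ideal of each D_i is contained in the maximal ideal of V). Then D is local. -/

import Mathlib

/-- **Lemma (intersection of dominated local overrings is local).**
Let `D` be an integral domain with quotient field `K` and let `{Dᵢ}` be a collection of
local overrings of `D` (subrings of `K` containing `D`) with `D = ⋂ᵢ Dᵢ`.  If there is a
valuation overring `V` of `D` containing every `Dᵢ` and dominating every `Dᵢ` (every
nonunit of `Dᵢ` is a nonunit of `V`), then `D` is local. -/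
theorem intersection_of_dominated_local_overrings_isLocalRing
    {K : Type*} [Field K] (D : Subring K) (hfrac : IsFractionRing D K)
    {ι : Type*} (Di : ι → Subring K)
    (hover : ∀ i, D ≤ Di i) (hloc : ∀ i, IsLocalRing (Di i))
    (hint : (⨅ i, Di i) = D)
    (V : ValuationSubring K) (hDV : D ≤ V.toSubring)
    (hVi : ∀ i, Di i ≤ V.toSubring)
    (hdom : ∀ i, ∀ x : K, (hx : x ∈ Di i) → ¬ IsUnit (⟨x, hx⟩ : Di i) →
      ¬ IsUnit (⟨x, hVi i hx⟩ : V.toSubring)) :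
    IsLocalRing D := by
  have hVloc : IsLocalRing V.toSubring := inferInstanceAs (IsLocalRing V)
  have key : ∀ c : D, ¬ IsUnit c → ¬ IsUnit (⟨c.1, hDV c.2⟩ : V.toSubring) := by
    intro c hc
    by_cases hc0 : (c : K) = 0
    · have h0 : (⟨c.1, hDV c.2⟩ : V.toSubring) = 0 := Subtype.ext hc0
      rw [h0]
      exact not_isUnit_zero
    · have hinv : (c : K)⁻¹ ∉ D := by
        intro h
        exact hc (IsUnit.of_mul_eq_one (a := c) ⟨_, h⟩ (Subtype.ext (mul_inv_cancel₀ hc0)))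
      have hex : ∃ i, (c : K)⁻¹ ∉ Di i := by
        by_contra h
        push_neg at h
        have hm := Subring.mem_iInf.mpr h
        rw [hint] at hm
        exact hinv hm
      obtain ⟨i, hi⟩ := hex
      have hci : (c : K) ∈ Di i := hover i c.2
      have hnu : ¬ IsUnit (⟨c.1, hci⟩ : Di i) := by
        intro hu
        obtain ⟨b, hb⟩ := hu.exists_right_inv
        apply hi
        have hK : (c : K) * (b : K) = 1 := by
          have := congrArg (Subtype.val) hb
          simpa using this
        have : (c : K)⁻¹ = (b : K) := inv_eq_of_mul_eq_one_right hK
        rw [this]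
        exact b.2
      exact hdom i c.1 hci hnu
  have : Nontrivial D := inferInstance
  apply IsLocalRing.of_nonunits_add
  intro a b ha hb hab
  have ha' := key a ha
  have hb' := key b hb
  have hsum : ((⟨a.1, hDV a.2⟩ : V.toSubring) + ⟨b.1, hDV b.2⟩) ∈ nonunits V.toSubring :=
    IsLocalRing.nonunits_add ha' hb'
  apply hsum
  obtain ⟨d, hd⟩ := hab.exists_right_inv
  refine IsUnit.of_mul_eq_one (a := _) ⟨d.1, hDV d.2⟩ (Subtype.ext ?_)
  have := congrArg (Subtype.val) hd
  simpa using this
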